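/- Let s,t ∈ (0,1), ν > 0, Q = (1-s+ν)/(1-s), R₂ = √(2s-s²), R² = 1 - (2t-t²)(2s-s²). For j,k ∈ ℤ and angles φ_j = 2πj/N, ψ ∈ ℝ, define p_j = (1-s, R₂(1-t)e^{iφ_j}), v_j = ((1-t)R₂, -(1-s)e^{iφ_j}), p*_k = (1-s, R₂(1-t)e^{i(φ_k+ψ)}), w_k = ((1-t)R₂, -(1-s+ν)e^{i(φ_k+ψ)}). If e^{i(φ_k - φ_j + ψ)} ≠ 1 and Q e^{i(φ_k-φ_j+ψ)} ≠ 1, then the complex lines ℓ_j = {p_j + v_j ζ} and ℓ*_k = {p*_k + w_k ζ} intersect in a unique point P_{j,k}, and ∥P_{j,k}∥² = R² (1 + (R₂²(1-t)²/(1-s)²) · F(φ_k - φ_j + ψ)²) where F(φ) = |1 - e^{iφ}|/|1 - Q e^{iφ}|. -/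

import Mathlib

/-- An element of ℂ² from two coordinates. -/
noncomputable def e2 (a b : ℂ) : EuclideanSpace ℂ (Fin 2) := WithLp.toLp 2 ![a, b]

/-- Point p = (1 - s, ρ e^{iφ}). -/
noncomputable def pt (s ρ φ : ℝ) : EuclideanSpace ℂ (Fin 2) :=
  e2 ((1 - s : ℝ) : ℂ) ((ρ : ℂ) * Complex.exp (φ * Complex.I))

/-- Direction v = (c, -d e^{iφ}). -/
noncomputable def dir (c d φ : ℝ) : EuclideanSpace ℂ (Fin 2) :=
  e2 ((c : ℝ) : ℂ) (-((d : ℝ) : ℂ) * Complex.exp (φ * Complex.I))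

/-- F(φ) = |1 - e^{iφ}| / |1 - Q e^{iφ}|. -/
noncomputable def Ffun (Q φ : ℝ) : ℝ :=
  ‖(1 - Complex.exp (φ * Complex.I))‖ /
    ‖(1 - (Q : ℂ) * Complex.exp (φ * Complex.I))‖

/-- Squared norm of the intersection point of ℓ_j and ℓ*_k. -/
lemma line_coords (P : EuclideanSpace ℂ (Fin 2)) (s ρ c d φ : ℝ) (ζ : ℂ) :
    P = pt s ρ φ + ζ • dir c d φ ↔
      P 0 = ((1 - s : ℝ) : ℂ) + ζ * (c : ℂ) ∧
      P 1 = (ρ : ℂ) * Complex.exp ((φ:ℝ) * Complex.I)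
            - ζ * (d : ℂ) * Complex.exp ((φ:ℝ) * Complex.I) := by
  constructor
  · rintro rfl
    refine ⟨?_, ?_⟩ <;> simp [pt, dir, e2] <;> ring
  · rintro ⟨h0, h1⟩
    ext i
    fin_cases i
    · simpa [pt, dir, e2] using h0
    · simp [pt, dir, e2, h1]; ring

lemma norm_sq_eq (P : EuclideanSpace ℂ (Fin 2)) :
    ‖P‖ ^ 2 = Complex.normSq (P 0) + Complex.normSq (P 1) := by
  rw [EuclideanSpace.norm_eq]
  rw [Real.sq_sqrt (by positivity)]
  simp [Fin.sum_univ_two, Complex.sq_norm]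

theorem stmt_11 (s t ν : ℝ) (hs : s ∈ Set.Ioo (0 : ℝ) 1) (ht : t ∈ Set.Ioo (0 : ℝ) 1)
    (hν : 0 < ν) (N : ℕ) (hN : 0 < N) (j k : ℤ) (ψ : ℝ)
    (R : ℝ) (hR0 : 0 ≤ R) (hR : R ^ 2 = 1 - (2 * t - t ^ 2) * (2 * s - s ^ 2))
    (hexp : Complex.exp ((2 * Real.pi * k / N - 2 * Real.pi * j / N + ψ : ℝ) * Complex.I) ≠ 1)
    (hexpQ : ((1 - s + ν) / (1 - s) : ℂ) *
        Complex.exp ((2 * Real.pi * k / N - 2 * Real.pi * j / N + ψ : ℝ) * Complex.I) ≠ 1) :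
    (∃! P : EuclideanSpace ℂ (Fin 2),
        (∃ ζ : ℂ, P = pt s (Real.sqrt (2 * s - s ^ 2) * (1 - t)) (2 * Real.pi * j / N) +
          ζ • dir ((1 - t) * Real.sqrt (2 * s - s ^ 2)) (1 - s) (2 * Real.pi * j / N)) ∧
        (∃ ζ : ℂ, P = pt s (Real.sqrt (2 * s - s ^ 2) * (1 - t)) (2 * Real.pi * k / N + ψ) +
          ζ • dir ((1 - t) * Real.sqrt (2 * s - s ^ 2)) (1 - s + ν)
            (2 * Real.pi * k / N + ψ))) ∧
    (∀ P : EuclideanSpace ℂ (Fin 2),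
        ((∃ ζ : ℂ, P = pt s (Real.sqrt (2 * s - s ^ 2) * (1 - t)) (2 * Real.pi * j / N) +
          ζ • dir ((1 - t) * Real.sqrt (2 * s - s ^ 2)) (1 - s) (2 * Real.pi * j / N)) ∧
        (∃ ζ : ℂ, P = pt s (Real.sqrt (2 * s - s ^ 2) * (1 - t)) (2 * Real.pi * k / N + ψ) +
          ζ • dir ((1 - t) * Real.sqrt (2 * s - s ^ 2)) (1 - s + ν)
            (2 * Real.pi * k / N + ψ))) →
        ‖P‖ ^ 2 = R ^ 2 * (1 +
          ((2 * s - s ^ 2) * (1 - t) ^ 2 / (1 - s) ^ 2) *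
            (Ffun ((1 - s + ν) / (1 - s))
              (2 * Real.pi * k / N - 2 * Real.pi * j / N + ψ)) ^ 2)) := by
  obtain ⟨hs0, hs1⟩ := hs
  obtain ⟨ht0, ht1⟩ := ht
  have ha0 : (0:ℝ) < 1 - s := by linarith
  have hss : (0:ℝ) < 2 * s - s ^ 2 := by nlinarith
  set φ1 : ℝ := 2 * Real.pi * j / N with hφ1
  set φ2 : ℝ := 2 * Real.pi * k / N + ψ with hφ2
  set φ : ℝ := 2 * Real.pi * k / N - 2 * Real.pi * j / N + ψ with hφ
  set ρ : ℝ := Real.sqrt (2 * s - s ^ 2) * (1 - t) with hρ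
  set c : ℝ := (1 - t) * Real.sqrt (2 * s - s ^ 2) with hc
  have hcρ : c = ρ := mul_comm _ _
  have hρ0 : (0:ℝ) < ρ := by
    apply mul_pos (Real.sqrt_pos.mpr hss); linarith
  have hρsq : ρ ^ 2 = (2 * s - s ^ 2) * (1 - t) ^ 2 := by
    rw [hρ, mul_pow, Real.sq_sqrt hss.le]
  set E1 : ℂ := Complex.exp ((φ1:ℝ) * Complex.I) with hE1
  set E2 : ℂ := Complex.exp ((φ2:ℝ) * Complex.I) with hE2def
  set E : ℂ := Complex.exp ((φ:ℝ) * Complex.I) with hEdef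
  have hφadd : φ1 + φ = φ2 := by rw [hφ1, hφ, hφ2]; ring
  have hE2 : E2 = E1 * E := by
    rw [hE1, hEdef, hE2def, ← Complex.exp_add, ← add_mul, ← Complex.ofReal_add, hφadd]
  set Q : ℂ := ((1 - s + ν) / (1 - s) : ℂ) with hQ
  have haC : ((1:ℂ) - s) ≠ 0 := by
    have h1 : ((1:ℂ) - s) = ((1 - s : ℝ) : ℂ) := by push_cast; ring
    rw [h1]
    exact_mod_cast ha0.ne'
  have hE1ne : E1 ≠ 0 := Complex.exp_ne_zero _
  have hQE : Q * E - 1 ≠ 0 := sub_ne_zero.mpr hexpQ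
  have haCne : ((1 - s : ℝ) : ℂ) ≠ 0 := by exact_mod_cast ha0.ne'
  have hbb : ((1 - s + ν : ℝ) : ℂ) = ((1 - s : ℝ) : ℂ) * Q := by
    rw [hQ]; push_cast
    field_simp
  have hfac : ((1 - s + ν : ℝ) : ℂ) * E2 - ((1 - s : ℝ):ℂ) * E1
      = ((1 - s : ℝ):ℂ) * E1 * (Q * E - 1) := by
    rw [hbb, hE2]; ring
  have hD : ((1 - s + ν : ℝ) : ℂ) * E2 - ((1 - s : ℝ):ℂ) * E1 ≠ 0 := by
    rw [hfac]; exact mul_ne_zero (mul_ne_zero haCne hE1ne) hQE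
  set ζ₀ : ℂ := (ρ:ℂ) * (E2 - E1) / (((1 - s + ν : ℝ):ℂ) * E2 - ((1 - s : ℝ):ℂ) * E1) with hζ₀
  have hζ₀eq : ζ₀ * (((1 - s + ν : ℝ):ℂ) * E2 - ((1 - s : ℝ):ℂ) * E1) = (ρ:ℂ) * (E2 - E1) :=
    div_mul_cancel₀ _ hD
  have hcne : (c:ℂ) ≠ 0 := by
    have : c ≠ 0 := by rw [hcρ]; exact hρ0.ne'
    exact_mod_cast this
  have key : ∀ P : EuclideanSpace ℂ (Fin 2),
      ((∃ ζ : ℂ, P = pt s ρ φ1 + ζ • dir c (1 - s) φ1) ∧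
       (∃ ζ : ℂ, P = pt s ρ φ2 + ζ • dir c (1 - s + ν) φ2)) ↔
      P = pt s ρ φ1 + ζ₀ • dir c (1 - s) φ1 := by
    intro P
    constructor
    · rintro ⟨⟨z1, h1⟩, ⟨z2, h2⟩⟩
      rw [line_coords] at h1 h2
      rw [← hE1] at h1
      rw [← hE2def] at h2
      have hz12 : z1 = z2 := by
        have h := h1.1.symm.trans h2.1
        have h' : z1 * (c:ℂ) = z2 * (c:ℂ) := by linear_combination h
        exact mul_right_cancel₀ hcne h'
      have heq := h1.2.symm.trans h2.2
      rw [← hz12] at heq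
      have hz1 : z1 = ζ₀ := by
        rw [hζ₀, eq_div_iff hD]
        linear_combination heq
      rw [line_coords, ← hE1]
      exact ⟨by rw [h1.1, hz1], by rw [h1.2, hz1]⟩
    · rintro rfl
      have hcoord := (line_coords (pt s ρ φ1 + ζ₀ • dir c (1-s) φ1) s ρ c (1-s) φ1 ζ₀).mp rfl
      rw [← hE1] at hcoord
      refine ⟨⟨ζ₀, rfl⟩, ⟨ζ₀, ?_⟩⟩
      rw [line_coords, ← hE2def]
      refine ⟨hcoord.1, ?_⟩
      rw [hcoord.2]
      linear_combination hζ₀eq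
  refine ⟨⟨pt s ρ φ1 + ζ₀ • dir c (1 - s) φ1, (key _).mpr rfl,
      fun P hP => (key P).mp hP⟩, ?_⟩
  intro P hP
  rw [(key P).mp hP, norm_sq_eq]
  have hcoord := (line_coords (pt s ρ φ1 + ζ₀ • dir c (1-s) φ1) s ρ c (1-s) φ1 ζ₀).mp rfl
  rw [hcoord.1, hcoord.2]
  have hE1sq : Complex.normSq E1 = 1 := by
    rw [hE1, Complex.normSq_eq_norm_sq, Complex.norm_exp_ofReal_mul_I]; norm_num
  have hfactor : ((ρ:ℂ) * Complex.exp ((φ1:ℝ) * Complex.I)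
        - ζ₀ * ((1-s:ℝ):ℂ) * Complex.exp ((φ1:ℝ) * Complex.I))
      = ((ρ:ℂ) - ζ₀ * ((1-s:ℝ):ℂ)) * E1 := by rw [hE1]; ring
  rw [hfactor, Complex.normSq_mul, hE1sq, mul_one]
  have hsum : Complex.normSq (((1-s:ℝ):ℂ) + ζ₀ * (c:ℂ))
        + Complex.normSq ((ρ:ℂ) - ζ₀ * ((1-s:ℝ):ℂ))
      = ((1-s)^2 + ρ^2) * (1 + Complex.normSq ζ₀) := by
    rw [hcρ]
    simp only [Complex.normSq_apply, Complex.add_re, Complex.add_im, Complex.sub_re,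
      Complex.sub_im, Complex.mul_re, Complex.mul_im, Complex.ofReal_re, Complex.ofReal_im]
    ring
  rw [hsum]
  have hRsq : (1-s)^2 + ρ^2 = R^2 := by rw [hρsq, hR]; ring
  have hζabs : Complex.normSq ζ₀ =
      (2*s-s^2)*(1-t)^2/(1-s)^2 * (Ffun ((1-s+ν)/(1-s)) φ)^2 := by
    have hQr : ((((1-s+ν)/(1-s) : ℝ)) : ℂ) = Q := by rw [hQ]; push_cast; ring
    have hF : (Ffun ((1-s+ν)/(1-s)) φ)^2
        = Complex.normSq (1 - E) / Complex.normSq (1 - Q*E) := by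
      rw [Ffun, div_pow, Complex.sq_norm, Complex.sq_norm, hQr, ← hEdef]
    have hnum : (ρ:ℂ) * (E2 - E1) = (ρ:ℂ) * E1 * (E - 1) := by rw [hE2]; ring
    rw [hζ₀, map_div₀, hnum, hfac]
    simp only [Complex.normSq_mul, Complex.normSq_ofReal, hE1sq]
    rw [hF]
    rw [show E - 1 = -(1 - E) by ring, Complex.normSq_neg,
      show Q * E - 1 = -(1 - Q * E) by ring, Complex.normSq_neg]
    have hne : Complex.normSq (1 - Q*E) ≠ 0 :=
      (Complex.normSq_pos.mpr (sub_ne_zero.mpr (Ne.symm hexpQ))).ne'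
    have hρρ : ρ * ρ = (2*s-s^2)*(1-t)^2 := by rw [← hρsq]; ring
    rw [hρρ]
    rw [div_mul_div_comm]
    ring
  rw [hRsq, hζabs]
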